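/- Let n ≥ 1, let m₁,…,mₙ be real numbers, let σ₁,…,σₙ be positive reals, and let S be a set of unordered pairs {i,j} with i ≠ j, with given real numbers c_{ij} for {i,j} ∈ S (a partial specification of covariances). Then the following are equivalent: (i) there exists a Borel probability measure on ℝⁿ with finite second moments whose coordinate random variables Xᵢ satisfy E[Xᵢ] = mᵢ, Var(Xᵢ) = σᵢ², and Cov(Xᵢ,Xⱼ) = c_{ij} for all {i,j} ∈ S; (ii) there exists a real symmetric n×n matrix R with Rᵢᵢ = 1, with R_{ij} = c_{ij}/(σᵢσⱼ) for all {i,j} ∈ S, and with all eigenvalues nonnegative (i.e. the partially specified correlation matrix admits a positive semidefinite completion). -/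

import Mathlib

open MeasureTheory ENNReal

section helperaux
variable {α : Type*} [MeasurableSpace α] {μ : Measure α}

lemma memLp_mul_int {f g : α → ℝ} (hf : MemLp f 2 μ) (hg : MemLp g 2 μ) :
    Integrable (fun x => f x * g x) μ := by
  rw [← memLp_one_iff_integrable]
  have h := hg.smul (φ := f) (r := 1) hf
  exact h

lemma var_nonneg' [IsProbabilityMeasure μ] {f : α → ℝ} (hf : MemLp f 2 μ) :
    0 ≤ (∫ x, f x * f x ∂μ) - (∫ x, f x ∂μ) * (∫ x, f x ∂μ) := by
  have hint : Integrable f μ := hf.integrable one_le_two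
  have hsq : Integrable (fun x => f x * f x) μ := memLp_mul_int hf hf
  set c := ∫ x, f x ∂μ with hc
  have h0 : 0 ≤ ∫ x, (f x - c) ^ 2 ∂μ := integral_nonneg fun x => sq_nonneg _
  have hexp : ∫ x, (f x - c) ^ 2 ∂μ = (∫ x, f x * f x ∂μ) - c * c := by
    have hfun : ∀ x, (f x - c) ^ 2 = f x * f x - (2 * c) * f x + c * c := fun x => by ring
    simp_rw [hfun]
    have h1 : Integrable (fun x => f x * f x - 2 * c * f x) μ := hsq.sub (hint.const_mul _)
    have h2 : Integrable (fun x => 2 * c * f x) μ := hint.const_mul _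
    rw [integral_add h1 (integrable_const (c * c)), integral_sub hsq h2,
      integral_const_mul, integral_const]
    simp [← hc]
    ring
  linarith [hexp ▸ h0]

end helperaux


lemma backward_aux (n : ℕ) (hn : 1 ≤ n) (m : Fin n → ℝ) (σ : Fin n → ℝ)
    (B : Matrix (Fin n) (Fin n) ℝ) (hBsymm : ∀ i j, B i j = B j i) :
    ∃ μ : Measure (Fin n → ℝ), IsProbabilityMeasure μ ∧
      (∀ i, MemLp (fun x => x i) 2 μ) ∧
      (∀ i, (∫ x, x i ∂μ) = m i) ∧
      (∀ i j, (∫ x, x i * x j ∂μ) = m i * m j + σ i * σ j * (B * B) i j) := by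
  classical
  have hn0 : (n : ℝ) ≠ 0 := Nat.cast_ne_zero.mpr (by omega)
  set t : ℝ := Real.sqrt n with ht
  have ht2 : t * t = n := Real.mul_self_sqrt (Nat.cast_nonneg n)
  set f : Fin n → (Fin n → ℝ) := fun k i => m i + t * (σ i * B i k) with hf
  set g : Fin n → (Fin n → ℝ) := fun k i => m i - t * (σ i * B i k) with hg
  set μ : Measure (Fin n → ℝ) :=
    (((2 * n : ℕ) : ℝ≥0∞))⁻¹ • ∑ k : Fin n, (Measure.dirac (f k) + Measure.dirac (g k)) with hμ
  have hd : ∀ (h : (Fin n → ℝ) → ℝ), Measurable h → ∀ a : Fin n → ℝ,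
      Integrable h (Measure.dirac a) :=
    fun h hh a => (integrable_const (h a)).congr (ae_eq_dirac' hh).symm
  have key : ∀ (h : (Fin n → ℝ) → ℝ), Measurable h →
      ∫ x, h x ∂μ = (((2 * n : ℕ) : ℝ))⁻¹ * ∑ k : Fin n, (h (f k) + h (g k)) := by
    intro h hh
    rw [hμ, integral_smul_measure,
      integral_finset_sum_measure (fun k _ => (hd h hh _).add_measure (hd h hh _))]
    have : ∀ k : Fin n, (∫ x, h x ∂(Measure.dirac (f k) + Measure.dirac (g k)))
        = h (f k) + h (g k) := by
      intro k
      rw [integral_add_measure (hd h hh _) (hd h hh _),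
        integral_dirac' _ _ hh.stronglyMeasurable, integral_dirac' _ _ hh.stronglyMeasurable]
    simp_rw [this]
    rw [ENNReal.toReal_inv, smul_eq_mul]
    norm_num
  have hprob : IsProbabilityMeasure μ := by
    constructor
    rw [hμ]
    simp only [Measure.smul_apply, Measure.coe_finset_sum, Finset.sum_apply,
      Measure.add_apply, Measure.dirac_apply_of_mem (Set.mem_univ _), smul_eq_mul]
    rw [Finset.sum_const, Finset.card_univ, Fintype.card_fin, nsmul_eq_mul]
    have h1 : (n : ℝ≥0∞) * (1 + 1) = ((2 * n : ℕ) : ℝ≥0∞) := by push_cast; ring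
    rw [h1, ENNReal.inv_mul_cancel ((Nat.cast_ne_zero (R := ℝ≥0∞)).mpr (by omega))
      (ENNReal.natCast_ne_top _)]
  have hae : ∀ (p : (Fin n → ℝ) → Prop), MeasurableSet {x | p x} →
      (∀ k, p (f k)) → (∀ k, p (g k)) → ∀ᵐ x ∂μ, p x := by
    intro p hp h1 h2
    rw [ae_iff]
    have hc : MeasurableSet {x | ¬ p x} := hp.compl
    rw [hμ]
    simp only [Measure.smul_apply, Measure.coe_finset_sum, Finset.sum_apply,
      Measure.add_apply, smul_eq_mul]
    have hz : ∀ k : Fin n, Measure.dirac (f k) {x | ¬ p x} + Measure.dirac (g k) {x | ¬ p x}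
        = 0 := by
      intro k
      rw [Measure.dirac_apply' _ hc, Measure.dirac_apply' _ hc]
      simp [Set.indicator_of_notMem, h1 k, h2 k]
    rw [Finset.sum_congr rfl (fun k _ => hz k), Finset.sum_const, smul_zero, mul_zero]
  have hL2 : ∀ i, MemLp (fun x : Fin n → ℝ => x i) 2 μ := by
    intro i
    refine MemLp.of_bound ((measurable_pi_apply i).aestronglyMeasurable)
      (∑ k : Fin n, (|f k i| + |g k i|)) ?_
    refine hae _ ?_ ?_ ?_
    · exact measurableSet_le (measurable_pi_apply i).norm measurable_const
    · intro k
      calc ‖f k i‖ = |f k i| := rfl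
        _ ≤ ∑ k' : Fin n, (|f k' i| + |g k' i|) := by
            refine Finset.single_le_sum (f := fun k' => |f k' i| + |g k' i|)
              (fun k' _ => by positivity) (Finset.mem_univ k) |>.trans' ?_
            simp [abs_nonneg, le_add_iff_nonneg_right]
    · intro k
      calc ‖g k i‖ = |g k i| := rfl
        _ ≤ ∑ k' : Fin n, (|f k' i| + |g k' i|) := by
            refine Finset.single_le_sum (f := fun k' => |f k' i| + |g k' i|)
              (fun k' _ => by positivity) (Finset.mem_univ k) |>.trans' ?_
            simp [abs_nonneg, le_add_iff_nonneg_left]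
  have hmean : ∀ i, (∫ x, x i ∂μ) = m i := by
    intro i
    rw [key _ (measurable_pi_apply i)]
    have hterm : ∀ k : Fin n, f k i + g k i = 2 * m i := by
      intro k; simp only [hf, hg]; ring
    simp_rw [hterm]
    rw [Finset.sum_const, Finset.card_univ, Fintype.card_fin, nsmul_eq_mul]
    push_cast
    field_simp
  refine ⟨μ, hprob, hL2, hmean, ?_⟩
  intro i j
  rw [key (fun x => x i * x j) ((measurable_pi_apply i).mul (measurable_pi_apply j))]
  have hterm : ∀ k : Fin n, f k i * f k j + g k i * g k j
      = 2 * (m i * m j) + (2 * (t * t)) * (σ i * σ j * (B i k * B k j)) := by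
    intro k; simp only [hf, hg]; rw [hBsymm j k]; ring
  simp_rw [hterm, ht2]
  rw [Finset.sum_add_distrib, Finset.sum_const, Finset.card_univ, Fintype.card_fin,
    nsmul_eq_mul, ← Finset.mul_sum, ← Finset.mul_sum, ← Matrix.mul_apply]
  push_cast
  field_simp


open MeasureTheory
open scoped MatrixOrder

/-- Partially specified covariances: a probability measure on `ℝⁿ` with finite second
moments, means `m i`, variances `σ i ^ 2`, and covariance `c i j` for the (unordered)
pairs `(i, j) ∈ S`, exists iff the partially specified correlation matrix admits a
positive semidefinite completion `R` with unit diagonal. -/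
theorem partial_covariances_iff_psd_completion
    (n : ℕ) (hn : 1 ≤ n) (m : Fin n → ℝ) (σ : Fin n → ℝ) (hσ : ∀ i, 0 < σ i)
    (S : Set (Fin n × Fin n)) (hSne : ∀ p ∈ S, p.1 ≠ p.2)
    (hSsymm : ∀ p ∈ S, (p.2, p.1) ∈ S)
    (c : Fin n → Fin n → ℝ) (hcsymm : ∀ p ∈ S, c p.2 p.1 = c p.1 p.2) :
    ((∃ μ : Measure (Fin n → ℝ), IsProbabilityMeasure μ ∧
        (∀ i, MemLp (fun x => x i) 2 μ) ∧
        (∀ i, (∫ x, x i ∂μ) = m i) ∧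
        (∀ i, (∫ x, (x i) ^ 2 ∂μ) - (∫ x, x i ∂μ) ^ 2 = σ i ^ 2) ∧
        (∀ p ∈ S, (∫ x, x p.1 * x p.2 ∂μ) - (∫ x, x p.1 ∂μ) * (∫ x, x p.2 ∂μ) =
          c p.1 p.2)) ↔
      (∃ R : Matrix (Fin n) (Fin n) ℝ, R.IsSymm ∧ (∀ i, R i i = 1) ∧
        (∀ p ∈ S, R p.1 p.2 = c p.1 p.2 / (σ p.1 * σ p.2)) ∧ R.PosSemidef)) := by
  constructor
  · rintro ⟨μ, hprob, hL2, hmean, hvar, hcov⟩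
    set K : Fin n → Fin n → ℝ :=
      fun i j => (∫ x, x i * x j ∂μ) - (∫ x, x i ∂μ) * (∫ x, x j ∂μ) with hK
    have hKsymm : ∀ i j, K j i = K i j := by
      intro i j
      have : (∫ x, x j * x i ∂μ) = ∫ x, x i * x j ∂μ := by
        apply integral_congr_ae; filter_upwards with x using mul_comm _ _
      simp [hK, this]; ring
    have hKdiag : ∀ i, K i i = σ i ^ 2 := by
      intro i
      have : (∫ x, x i * x i ∂μ) = ∫ x, (x i) ^ 2 ∂μ := by
        apply integral_congr_ae; filter_upwards with x using (sq (x i)).symm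
      rw [hK]; simp only [this]
      rw [← hvar i]; ring
    refine ⟨Matrix.of (fun i j => K i j / (σ i * σ j)), ?_, ?_, ?_, ?_⟩
    · exact Matrix.IsSymm.ext fun i j => by
        simp only [Matrix.of_apply, hKsymm i j, mul_comm (σ j) (σ i)]
    · intro i
      simp only [Matrix.of_apply, hKdiag i]
      rw [div_eq_one_iff_eq (mul_pos (hσ i) (hσ i)).ne']; ring
    · intro p hp
      simp only [Matrix.of_apply, hK]
      rw [hcov p hp]
    · rw [Matrix.posSemidef_iff_dotProduct_mulVec]
      constructor
      · exact Matrix.IsHermitian.ext fun i j => by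
          simp only [Matrix.of_apply, star_trivial, hKsymm j i, mul_comm (σ j) (σ i)]
      · intro v
        set a : Fin n → ℝ := fun i => v i / σ i with ha
        have hint1 : ∀ i, Integrable (fun x : Fin n → ℝ => x i) μ :=
          fun i => (hL2 i).integrable one_le_two
        have hint2 : ∀ i j, Integrable (fun x : Fin n → ℝ => x i * x j) μ :=
          fun i j => memLp_mul_int (hL2 i) (hL2 j)
        set Y : (Fin n → ℝ) → ℝ := fun x => ∑ i, a i * x i with hY
        have hYL2 : MemLp Y 2 μ := by
          rw [hY]
          have h := memLp_finsetSum' (μ := μ) (p := 2) Finset.univ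
            (fun i (_ : i ∈ Finset.univ) => (hL2 i).const_mul (a i))
          have heq : (∑ i : Fin n, fun x : Fin n → ℝ => a i * x i)
              = fun x : Fin n → ℝ => ∑ i : Fin n, a i * x i := by
            ext x; simp
          exact heq ▸ h
        have hYint : ∫ x, Y x ∂μ = ∑ i, a i * ∫ x, x i ∂μ := by
          rw [hY, integral_finset_sum _ (fun i _ => (hint1 i).const_mul (a i))]
          simp_rw [integral_const_mul]
        have hY2 : ∫ x, Y x * Y x ∂μ = ∑ i, ∑ j, a i * a j * ∫ x, x i * x j ∂μ := by
          have hfun : ∀ x : Fin n → ℝ, Y x * Y x = ∑ i, ∑ j, (a i * a j) * (x i * x j) := by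
            intro x
            rw [hY, Finset.sum_mul_sum]
            exact Finset.sum_congr rfl fun i _ => Finset.sum_congr rfl fun j _ => by ring
          simp_rw [hfun]
          rw [integral_finset_sum _ (fun i _ => integrable_finset_sum _
            (fun j _ => (hint2 i j).const_mul _))]
          refine Finset.sum_congr rfl fun i _ => ?_
          rw [integral_finset_sum _ (fun j _ => (hint2 i j).const_mul _)]
          exact Finset.sum_congr rfl fun j _ => integral_const_mul _ _
        have hvn := var_nonneg' hYL2
        have hkey : dotProduct (star v) (Matrix.mulVec (Matrix.of fun i j => K i j / (σ i * σ j)) v)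
            = (∫ x, Y x * Y x ∂μ) - (∫ x, Y x ∂μ) * (∫ x, Y x ∂μ) := by
          rw [hY2, hYint, Finset.sum_mul_sum]
          simp only [dotProduct, Matrix.mulVec, Matrix.of_apply, star_trivial,
            dotProduct]
          rw [← Finset.sum_sub_distrib]
          refine Finset.sum_congr rfl fun i _ => ?_
          rw [Finset.mul_sum, ← Finset.sum_sub_distrib]
          refine Finset.sum_congr rfl fun j _ => ?_
          rw [hK, ha]
          field_simp
        rw [hkey]
        exact hvn
  · rintro ⟨R, hRsymm, hRdiag, hRS, hRpsd⟩
    classical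
    obtain ⟨μ, hprob, hL2, hmean, hmom⟩ := backward_aux n hn m σ (CFC.sqrt R)
      (fun i j => by
        have h := (Matrix.nonneg_iff_posSemidef.mp (CFC.sqrt_nonneg R)).1.apply j i
        simpa [star_trivial] using h)
    have hBB : CFC.sqrt R * CFC.sqrt R = R := CFC.sqrt_mul_sqrt_self R hRpsd.nonneg
    refine ⟨μ, hprob, hL2, hmean, ?_, ?_⟩
    · intro i
      have hsq : (∫ x, (x i) ^ 2 ∂μ) = ∫ x, x i * x i ∂μ := by
        apply integral_congr_ae; filter_upwards with x using sq (x i)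
      rw [hsq, hmom i i, hBB, hRdiag i, hmean i]
      ring
    · intro p hp
      have hne1 := (hσ p.1).ne'
      have hne2 := (hσ p.2).ne'
      rw [hmom p.1 p.2, hBB, hRS p hp, hmean p.1, hmean p.2]
      field_simp
      ring
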